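/- Let G be a finite group with Sylow 2-subgroup S satisfying Real(S) ⊆ Z(S), and suppose every non-central real element x of G satisfies |x^G|₂ = 2^a for a fixed a ≥ 1 (all non-central real class sizes have the same 2-part, which is even). Then every nontrivial real element of G of 2-power order is a central involution of G. -/

import Mathlib

/-- An element `x` of a group is *real* if it is conjugate to its inverse. -/
def IsRealEl (G : Type*) [Group G] (x : G) : Prop := ∃ g : G, g⁻¹ * x * g = x⁻¹

/-- The size of the conjugacy class of `x` in `G`. -/
noncomputable def clSize (G : Type*) [Group G] (x : G) : ℕ := Nat.card {y : G // IsConj x y}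

private lemma conj_pow_aux {G : Type*} [Group G] {y h : G} (hin : h⁻¹ * y * h = y⁻¹) :
    ∀ n : ℕ, (h ^ n)⁻¹ * y * h ^ n = if Even n then y else y⁻¹ := by
  intro n
  induction n with
  | zero => simp
  | succ n ih =>
    have h1 : (h ^ (n+1))⁻¹ * y * h ^ (n+1) = h⁻¹ * ((h ^ n)⁻¹ * y * h ^ n) * h := by
      rw [pow_succ]; group
    rw [h1, ih]
    have hinv' : h⁻¹ * y⁻¹ * h = y := by
      have h2 := congrArg Inv.inv hin
      rw [inv_inv] at h2
      simpa [mul_inv_rev, mul_assoc] using h2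
    by_cases he : Even n
    · simp [he, Nat.even_add_one, hin]
    · simp [he, Nat.even_add_one, hinv']

private lemma clSize_eq_index {G : Type*} [Group G] (x : G) :
    clSize G x = (Subgroup.centralizer {x}).index := by
  have e1 : {y : G // IsConj x y} ≃ MulAction.orbit (ConjAct G) x :=
    Equiv.subtypeEquiv (Equiv.refl G) (fun z => by
      simp only [Equiv.refl_apply]
      rw [ConjAct.mem_orbit_conjAct]
      exact ⟨IsConj.symm, IsConj.symm⟩)
  have e2 := MulAction.orbitEquivQuotientStabilizer (ConjAct G) x
  have h3 : clSize G x = (MulAction.stabilizer (ConjAct G) x).index := by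
    rw [clSize, Nat.card_congr (e1.trans e2)]; rfl
  rw [h3, Subgroup.centralizer_eq_comap_stabilizer]
  exact (Subgroup.index_comap_of_surjective _ (f := ConjAct.toConjAct.toMonoidHom)
    ConjAct.toConjAct.surjective).symm

theorem stmt_19 {G : Type*} [Group G] [Finite G] (S : Sylow 2 G)
    (hreal : ∀ x : (S : Subgroup G), IsRealEl (S : Subgroup G) x →
      x ∈ Subgroup.center (S : Subgroup G))
    (a : ℕ) (ha : 1 ≤ a)
    (h2part : ∀ x : G, IsRealEl G x → x ∉ Subgroup.center G →
      (clSize G x).factorization 2 = a) :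
    ∀ y : G, IsRealEl G y → y ≠ 1 → (∃ k : ℕ, orderOf y = 2 ^ k) →
      y ^ 2 = 1 ∧ y ∈ Subgroup.center G := by
  haveI : Fact (Nat.Prime 2) := ⟨Nat.prime_two⟩
  rintro y ⟨h, hinv⟩ hy1 ⟨k, hk⟩
  -- a 2-element t inverting y
  set n0 := orderOf h with hn0def
  have hn0 : n0 ≠ 0 := (orderOf_pos h).ne'
  set ν := n0.factorization 2 with hν
  set m := n0 / 2 ^ ν with hm
  have hmn : 2 ^ ν * m = n0 := Nat.ordProj_mul_ordCompl_eq_self n0 2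
  have hmodd : ¬ Even m := fun he =>
    Nat.not_dvd_ordCompl Nat.prime_two hn0 he.two_dvd
  set t := h ^ m with ht
  have tinv : t⁻¹ * y * t = y⁻¹ := by
    rw [ht, conj_pow_aux hinv m, if_neg hmodd]
  have tpow : t ^ (2 ^ ν) = 1 := by
    rw [ht, ← pow_mul, mul_comm, hmn, pow_orderOf_eq_one]
  -- conj of y by t is y⁻¹; conj of y⁻¹ by t is y
  have tconj : t * y * t⁻¹ = y⁻¹ := by
    have e1 : y = t * y⁻¹ * t⁻¹ := by rw [← tinv]; group
    have e2 := congrArg Inv.inv e1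
    rw [e2]; group
  -- the 2-group generated by y and t
  have hy2 : IsPGroup 2 (Subgroup.zpowers y) :=
    IsPGroup.of_card (by rw [Nat.card_zpowers, hk])
  have ht2 : IsPGroup 2 (Subgroup.zpowers t) := by
    obtain ⟨j, _, hj⟩ := (Nat.dvd_prime_pow Nat.prime_two).mp (orderOf_dvd_of_pow_eq_one tpow)
    exact IsPGroup.of_card (by rw [Nat.card_zpowers, hj])
  have hnorm : Subgroup.zpowers t ≤ Subgroup.normalizer ((Subgroup.zpowers y : Subgroup G) : Set G) := by
    rw [Subgroup.zpowers_le]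
    rw [Subgroup.mem_normalizer_iff]
    intro g
    constructor
    · rintro ⟨n, rfl⟩
      refine ⟨-n, ?_⟩
      show y ^ (-n : ℤ) = t * y ^ n * t⁻¹
      rw [← conj_zpow, tconj, zpow_neg, inv_zpow]
    · rintro ⟨n, hn⟩
      have hn' : (y : G) ^ n = t * g * t⁻¹ := hn
      refine ⟨-n, ?_⟩
      show y ^ (-n : ℤ) = g
      have hg2 : g = t⁻¹ * y ^ n * t⁻¹⁻¹ := by rw [inv_inv, hn']; group
      rw [hg2, ← conj_zpow]
      have e3 : t⁻¹ * y * t⁻¹⁻¹ = y⁻¹ := by rw [inv_inv]; exact tinv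
      rw [e3, zpow_neg, inv_zpow]
  have hH : IsPGroup 2 (Subgroup.zpowers y ⊔ Subgroup.zpowers t : Subgroup G) :=
    IsPGroup.to_sup_of_normal_left' hy2 ht2 hnorm
  obtain ⟨Q, hQ⟩ := hH.exists_le_sylow
  obtain ⟨g, hg⟩ := MulAction.exists_smul_eq G Q S
  have hyQ : y ∈ (Q : Subgroup G) := hQ (Subgroup.mem_sup_left (Subgroup.mem_zpowers y))
  have htQ : t ∈ (Q : Subgroup G) := hQ (Subgroup.mem_sup_right (Subgroup.mem_zpowers t))
  set y' := g * y * g⁻¹ with hy'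
  set t' := g * t * g⁻¹ with ht'
  have hy'S : y' ∈ (S : Subgroup G) := by
    rw [← hg, Sylow.coe_subgroup_smul, Subgroup.mem_smul_pointwise_iff_exists]
    exact ⟨y, hyQ, by simp [MulAut.smul_def, hy', mul_assoc]⟩
  have ht'S : t' ∈ (S : Subgroup G) := by
    rw [← hg, Sylow.coe_subgroup_smul, Subgroup.mem_smul_pointwise_iff_exists]
    exact ⟨t, htQ, by simp [MulAut.smul_def, ht', mul_assoc]⟩
  have ht'inv : t'⁻¹ * y' * t' = y'⁻¹ := by
    rw [hy', ht']
    have : (g * t * g⁻¹)⁻¹ * (g * y * g⁻¹) * (g * t * g⁻¹) = g * (t⁻¹ * y * t) * g⁻¹ := by group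
    rw [this, tinv]; group
  -- y' is real in S, hence central in S
  have hy'c : (⟨y', hy'S⟩ : (S : Subgroup G)) ∈ Subgroup.center (S : Subgroup G) := by
    apply hreal
    exact ⟨⟨t', ht'S⟩, by ext; simpa using ht'inv⟩
  have hSle : (S : Subgroup G) ≤ Subgroup.centralizer {y'} := by
    intro s hs
    rw [Subgroup.mem_centralizer_iff]
    rintro z rfl
    have hcz := congrArg Subtype.val ((Subgroup.mem_center_iff.mp hy'c) ⟨s, hs⟩)
    have hcz' : s * y' = y' * s := by simpa using hcz
    exact hcz'.symm
  -- y' is real in G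
  have hy'real : IsRealEl G y' := ⟨t', ht'inv⟩
  -- y' must be central in G
  have hy'Z : y' ∈ Subgroup.center G := by
    by_contra hc
    have hfa := h2part y' hy'real hc
    have hcl0 : clSize G y' ≠ 0 := by
      intro h0
      rw [h0] at hfa
      simp at hfa
      omega
    have hdvd : 2 ∣ clSize G y' := by
      rw [(Nat.Prime.dvd_iff_one_le_factorization Nat.prime_two hcl0), hfa]
      exact ha
    rw [clSize_eq_index] at hdvd
    have hrelne : S.relIndex (Subgroup.normalizer ((S : Subgroup G) : Set G)) ≠ 0 :=
      Subgroup.index_ne_zero_of_finite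
    have hnd : ¬ 2 ∣ (S : Subgroup G).index := Sylow.not_dvd_index' S hrelne
    exact hnd (hdvd.trans (Subgroup.index_dvd_of_le hSle))
  -- conclude
  have hyy' : y = y' := by
    have hc := (Subgroup.mem_center_iff.mp hy'Z) g⁻¹
    have e : g⁻¹ * y' * g = y' := by rw [hc]; group
    rw [← e, hy']; group
  have hyZ : y ∈ Subgroup.center G := hyy' ▸ hy'Z
  have hcomm := (Subgroup.mem_center_iff.mp hyZ) h
  have hyy : y = y⁻¹ := by
    rw [← hinv, show h⁻¹ * y * h = h⁻¹ * (y * h) from by group, ← hcomm]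
    group
  refine ⟨?_, hyZ⟩
  rw [pow_two]
  nth_rewrite 2 [hyy]
  simp
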